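/- Let M be a complex normed (associative unital) algebra, let τ : M → ℂ be a continuous ℂ-linear functional with τ(xy) = τ(yx) for all x, y ∈ M, let s = (s₁,…,sₙ) and b = (b₁,…,bₙ) be n-tuples in M, and let P ∈ A. Then the map ℂ ∋ ε ↦ τ(ev_{s+εb}(P)) has derivative at ε = 0 equal to Σ_{j=1}^n τ(b_j · ev_s(δ_j P)). -/

import Mathlib

open scoped TensorProduct

noncomputable section

/-- The free algebra `A = ℂ⟨X₁,…,Xₙ⟩` on `n` generators. -/
abbrev FA (n : ℕ) := FreeAlgebra ℂ (Fin n)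

/-- The generator `X i`. -/
def X {n : ℕ} (i : Fin n) : FA n := FreeAlgebra.ι ℂ i

/-- The monomial `X_{i₁} ⋯ X_{i_m}` associated to a list of indices. -/
def mono {n : ℕ} (l : List (Fin n)) : FA n := (l.map X).prod

lemma mono_nil {n : ℕ} : mono (n := n) [] = 1 := rfl
lemma mono_cons {n : ℕ} (i : Fin n) (t : List (Fin n)) :
    mono (i :: t) = X i * mono t := by simp [mono]

lemma lift_mono {n : ℕ} {M : Type*} [Ring M] [Algebra ℂ M] (c : Fin n → M)
    (l : List (Fin n)) :
    FreeAlgebra.lift ℂ c (mono l) = (l.map c).prod := by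
  induction l with
  | nil => simp [mono]
  | cons i t ih => simp [mono_cons, map_mul, ih, X, FreeAlgebra.lift_ι_apply]

lemma mono_append {n : ℕ} (l₁ l₂ : List (Fin n)) :
    mono (l₁ ++ l₂) = mono l₁ * mono l₂ := by
  simp [mono]

lemma span_mono {n : ℕ} : Submodule.span ℂ (Set.range (mono (n := n))) = ⊤ := by
  rw [eq_top_iff]
  rintro P -
  induction P using FreeAlgebra.induction with
  | grade0 r =>
    have : (algebraMap ℂ (FA n)) r = r • mono [] := by
      simp [mono_nil, Algebra.algebraMap_eq_smul_one]
    rw [this]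
    exact Submodule.smul_mem _ _ (Submodule.subset_span ⟨[], rfl⟩)
  | grade1 i =>
    have : FreeAlgebra.ι ℂ i = mono [i] := by simp [mono, X]
    rw [this]; exact Submodule.subset_span ⟨[i], rfl⟩
  | mul x y hx hy =>
    have h := Submodule.mul_mem_mul hx hy
    rw [Submodule.span_mul_span] at h
    refine Submodule.span_le.2 ?_ h
    rintro z ⟨a, ⟨la, rfl⟩, c, ⟨lc, rfl⟩, rfl⟩
    exact Submodule.subset_span ⟨la ++ lc, mono_append la lc⟩
  | add x y hx hy => exact add_mem hx hy

lemma deriv_list {n : ℕ} {M : Type*} [NormedRing M] [NormedAlgebra ℂ M]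
    (s b : Fin n → M) (l : List (Fin n)) :
    HasDerivAt (fun ε : ℂ => ((l.map (fun i => s i + ε • b i)).prod : M))
      (∑ k : Fin l.length,
        ((l.take k.val).map s).prod * b (l.get k) * ((l.drop (k.val + 1)).map s).prod)
      0 := by
  induction l with
  | nil => simpa using hasDerivAt_const (0 : ℂ) (1 : M)
  | cons i t ih =>
    have h1 : HasDerivAt (fun ε : ℂ => s i + ε • b i) (b i) 0 := by
      simpa using ((hasDerivAt_id (0 : ℂ)).smul_const (b i)).const_add (s i)
    have h2 := h1.mul ih
    simp only [List.map_cons, List.prod_cons]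
    convert h2 using 1
    · rfl
    simp only [List.length_cons]
    rw [Fin.sum_univ_succ]
    simp [Finset.mul_sum, mul_assoc]

lemma trace_id {n : ℕ} {M : Type*} [NormedRing M] [NormedAlgebra ℂ M]
    (τ : M →L[ℂ] ℂ) (htr : ∀ x y : M, τ (x * y) = τ (y * x))
    (s b : Fin n → M)
    (δ : Fin n → (FA n →ₗ[ℂ] FA n))
    (hδ : ∀ (j : Fin n) (l : List (Fin n)),
      δ j (mono l) = ∑ k : Fin l.length,
        if l.get k = j then mono (l.drop (k.val + 1)) * mono (l.take k.val) else 0)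
    (l : List (Fin n)) :
    τ (∑ k : Fin l.length,
        ((l.take k.val).map s).prod * b (l.get k) * ((l.drop (k.val + 1)).map s).prod)
      = ∑ j : Fin n, τ (b j * FreeAlgebra.lift ℂ s (δ j (mono l))) := by
  have hR : ∀ j, τ (b j * FreeAlgebra.lift ℂ s (δ j (mono l)))
      = ∑ k : Fin l.length, if l.get k = j then
          τ (b (l.get k) * (((l.drop (k.val + 1)).map s).prod
            * ((l.take k.val).map s).prod)) else 0 := by
    intro j
    rw [hδ j l, map_sum, Finset.mul_sum, map_sum]
    refine Finset.sum_congr rfl fun k _ => ?_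
    split_ifs with h
    · subst h; simp only [map_mul, lift_mono]
    · simp
  simp only [hR]
  rw [map_sum, Finset.sum_comm]
  refine Finset.sum_congr rfl fun k _ => ?_
  rw [Finset.sum_ite_eq, if_pos (Finset.mem_univ _), mul_assoc, htr, mul_assoc]

/-- subsequently applying a continuous tracial functional `τ` on a complex
normed unital algebra `M`, the map `ε ↦ τ(ev_{s+εb}(P))` has derivative at `ε = 0` equal to
`Σ_j τ(b_j · ev_s(δ_j P))`, where `δ_j` is the `j`-th cyclic derivative. -/
theorem stmt5 {n : ℕ} (hn : 1 ≤ n)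
    (M : Type*) [NormedRing M] [NormedAlgebra ℂ M]
    (τ : M →L[ℂ] ℂ) (htr : ∀ x y : M, τ (x * y) = τ (y * x))
    (s b : Fin n → M)
    (δ : Fin n → (FA n →ₗ[ℂ] FA n))
    (hδ : ∀ (j : Fin n) (l : List (Fin n)),
      δ j (mono l) = ∑ k : Fin l.length,
        if l.get k = j then mono (l.drop (k.val + 1)) * mono (l.take k.val) else 0)
    (P : FA n) :
    HasDerivAt (fun ε : ℂ => τ (FreeAlgebra.lift ℂ (fun i => s i + ε • b i) P))
      (∑ j : Fin n, τ (b j * FreeAlgebra.lift ℂ s (δ j P))) 0 := by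
  have hmem : P ∈ Submodule.span ℂ (Set.range (mono (n := n))) := by
    rw [span_mono]; trivial
  induction hmem using Submodule.span_induction with
  | mem x hx =>
    obtain ⟨l, rfl⟩ := hx
    have hd := deriv_list s b l
    have h := τ.hasFDerivAt.comp_hasDerivAt 0 hd
    have heq : (fun ε : ℂ => τ (FreeAlgebra.lift ℂ (fun i => s i + ε • b i) (mono l)))
        = fun ε : ℂ => τ ((l.map (fun i => s i + ε • b i)).prod) := by
      funext ε; rw [lift_mono]
    rw [heq, ← trace_id τ htr s b δ hδ l]
    exact h
  | zero => simpa using hasDerivAt_const (0 : ℂ) (0 : ℂ)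
  | add x y hx hy ihx ihy =>
    have h := ihx.add ihy
    have heq : (fun ε : ℂ => τ (FreeAlgebra.lift ℂ (fun i => s i + ε • b i) (x + y)))
        = fun ε : ℂ => τ (FreeAlgebra.lift ℂ (fun i => s i + ε • b i) x)
          + τ (FreeAlgebra.lift ℂ (fun i => s i + ε • b i) y) := by
      funext ε; simp [map_add]
    rw [heq]
    convert h using 1
    · rfl
    · rfl
    · rfl
    simp [map_add, mul_add, Finset.sum_add_distrib]
  | smul c x hx ih =>
    have h := ih.const_smul c
    have heq : (fun ε : ℂ => τ (FreeAlgebra.lift ℂ (fun i => s i + ε • b i) (c • x)))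
        = fun ε : ℂ => c • τ (FreeAlgebra.lift ℂ (fun i => s i + ε • b i) x) := by
      funext ε; simp [map_smul]
    rw [heq]
    convert h using 1
    · rfl
    · rfl
    · rfl
    simp [map_smul, Finset.mul_sum, mul_smul_comm]
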